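/- An element a of a complex unital Banach algebra A has a g-Drazin inverse if and only if there exists p ∈ A commuting with a such that a + p is invertible and ap is quasinilpotent. (Note: p is not assumed idempotent.) -/

import Mathlib

open Filter Finset

/-- An element of a complex (Banach) algebra is quasinilpotent if its spectral radius is zero. -/
noncomputable def Quasinilpotent {A : Type*} [Ring A] [Algebra ℂ A] (q : A) : Prop :=
  spectralRadius ℂ q = 0

/-- `a` has a generalized Drazin inverse: some `b` with `ab = ba`, `b = bab`,
and `a - a²b` quasinilpotent. -/
noncomputable def HasGDrazin {A : Type*} [Ring A] [Algebra ℂ A] (a : A) : Prop :=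
  ∃ b : A, a * b = b * a ∧ b = b * a * b ∧ Quasinilpotent (a - a ^ 2 * b)

set_option linter.unusedSectionVars false

section Aux

lemma centralBinom_le_four_pow (n : ℕ) : Nat.centralBinom n ≤ 4 ^ n := by
  have h : Nat.centralBinom n ≤ ∑ m ∈ range (2 * n + 1), (2 * n).choose m :=
    Finset.single_le_sum (f := fun m => (2 * n).choose m) (fun i _ => Nat.zero_le _)
      (by simp [Finset.mem_range]; omega)
  calc Nat.centralBinom n ≤ 2 ^ (2 * n) := by
        rw [← Nat.sum_range_choose (2 * n)]; exact h
    _ = 4 ^ n := by rw [pow_mul]; norm_num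

lemma centralBinom_conv (m : ℕ) :
    ∑ i ∈ range (m + 1), Nat.centralBinom i * Nat.centralBinom (m - i) = 4 ^ m := by
  set a := Nat.centralBinom with ha
  -- key: (m+1) * S(m+1) = 4 * (m+1) * S m, induction
  suffices H : ∀ m : ℕ, ∑ i ∈ range (m + 1), a i * a (m - i) = 4 ^ m from H m
  intro m
  induction m with
  | zero => simp [ha, Nat.centralBinom]
  | succ m ih =>
    -- claim A (at any level M): M * S M = 2 * ∑ i in range (M+1), i * (a i * a (M-i))
    have claimA : ∀ M : ℕ, M * (∑ i ∈ range (M + 1), a i * a (M - i))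
        = 2 * ∑ i ∈ range (M + 1), i * (a i * a (M - i)) := by
      intro M
      have refl1 : ∑ i ∈ range (M + 1), (M - i) * (a i * a (M - i))
          = ∑ i ∈ range (M + 1), i * (a i * a (M - i)) := by
        rw [← Finset.sum_range_reflect]
        apply Finset.sum_congr rfl
        intro i hi
        simp only [Finset.mem_range] at hi
        have h1 : M - (M - i) = i := by omega
        have h2 : M + 1 - 1 - i = M - i := by omega
        rw [h2, h1, mul_comm (a (M-i)) (a i)]
      calc M * (∑ i ∈ range (M + 1), a i * a (M - i))
          = ∑ i ∈ range (M + 1), (i + (M - i)) * (a i * a (M - i)) := by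
            rw [Finset.mul_sum]
            apply Finset.sum_congr rfl
            intro i hi
            simp only [Finset.mem_range] at hi
            congr 1
            omega
        _ = ∑ i ∈ range (M + 1), i * (a i * a (M - i))
            + ∑ i ∈ range (M + 1), (M - i) * (a i * a (M - i)) := by
            rw [← Finset.sum_add_distrib]
            apply Finset.sum_congr rfl
            intro i _
            ring
        _ = 2 * ∑ i ∈ range (M + 1), i * (a i * a (M - i)) := by rw [refl1]; ring
    -- claim B : shift
    have claimB : ∑ i ∈ range (m + 2), i * (a i * a (m + 1 - i))
        = ∑ i ∈ range (m + 1), (i+1) * a (i+1) * a (m - i) := by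
      rw [Finset.sum_range_succ' (fun i => i * (a i * a (m + 1 - i))) (m+1)]
      simp only [Nat.zero_mul, add_zero, zero_mul]
      apply Finset.sum_congr rfl
      intro i hi
      have : m + 1 - (i + 1) = m - i := by omega
      rw [this]; ring
    -- use recurrence
    have claimC : ∑ i ∈ range (m + 1), (i+1) * a (i+1) * a (m - i)
        = 4 * (∑ i ∈ range (m + 1), i * (a i * a (m - i))) + 2 * 4 ^ m := by
      have : ∀ i, (i+1) * a (i+1) = (4 * i + 2) * a i := by
        intro i
        have h := Nat.succ_mul_centralBinom_succ i
        rw [ha]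
        calc (i+1) * Nat.centralBinom (i+1) = 2 * (2*i+1) * Nat.centralBinom i := h
          _ = (4*i+2) * Nat.centralBinom i := by ring
      calc ∑ i ∈ range (m + 1), (i+1) * a (i+1) * a (m - i)
          = ∑ i ∈ range (m + 1), (4 * i + 2) * a i * a (m - i) := by
            apply Finset.sum_congr rfl; intro i _; rw [this i]
        _ = 4 * (∑ i ∈ range (m + 1), i * (a i * a (m - i)))
            + 2 * ∑ i ∈ range (m + 1), a i * a (m - i) := by
            rw [Finset.mul_sum, Finset.mul_sum, ← Finset.sum_add_distrib]
            apply Finset.sum_congr rfl; intro i _; ring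
        _ = 4 * (∑ i ∈ range (m + 1), i * (a i * a (m - i))) + 2 * 4 ^ m := by rw [ih]
    -- combine: (m+1) * S(m+1) = 2 * [claimB] = 2*(4*T + 2*4^m) where 2*T = m * 4^m
    have hT : 2 * ∑ i ∈ range (m + 1), i * (a i * a (m - i)) = m * 4 ^ m := by
      rw [← claimA m, ih]
    have key : (m + 1) * (∑ i ∈ range (m + 2), a i * a (m + 1 - i)) = (m+1) * 4 ^ (m+1) := by
      calc (m + 1) * (∑ i ∈ range (m + 2), a i * a (m + 1 - i))
          = 2 * ∑ i ∈ range (m + 2), i * (a i * a (m + 1 - i)) := claimA (m+1)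
        _ = 2 * ∑ i ∈ range (m + 1), (i+1) * a (i+1) * a (m - i) := by rw [claimB]
        _ = 2 * (4 * (∑ i ∈ range (m + 1), i * (a i * a (m - i))) + 2 * 4 ^ m) := by rw [claimC]
        _ = 4 * (2 * ∑ i ∈ range (m + 1), i * (a i * a (m - i))) + 4 * 4 ^ m := by ring
        _ = 4 * (m * 4 ^ m) + 4 * 4 ^ m := by rw [hT]
        _ = (m+1) * 4 ^ (m+1) := by ring
    exact Nat.eq_of_mul_eq_mul_left (by omega) key

variable {A : Type*} [NormedRing A] [NormedAlgebra ℂ A] [CompleteSpace A]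

lemma quasi_tendsto {q : A} (hq : Quasinilpotent q) :
    Tendsto (fun k : ℕ => (‖q ^ k‖₊ : ENNReal) ^ (1 / (k:ℝ))) atTop (nhds 0) := by
  have := spectrum.pow_nnnorm_pow_one_div_tendsto_nhds_spectralRadius q
  rwa [hq] at this

/-- commuting product with a quasinilpotent is quasinilpotent -/
lemma Quasinilpotent.mul_commute {q x : A} (hq : Quasinilpotent q) (h : Commute q x) :
    Quasinilpotent (q * x) := by
  have hle : spectralRadius ℂ (q * x) ≤
      atTop.liminf fun k : ℕ => (‖(q * x) ^ k‖₊ : ENNReal) ^ (1 / (k:ℝ)) :=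
    spectrum.spectralRadius_le_liminf_pow_nnnorm_pow_one_div ℂ (q * x)
  have hbound : ∀ᶠ k : ℕ in atTop,
      (‖(q * x) ^ k‖₊ : ENNReal) ^ (1 / (k:ℝ)) ≤ (‖q ^ k‖₊ : ENNReal) ^ (1 / (k:ℝ)) * ‖x‖₊ := by
    filter_upwards [eventually_ge_atTop 1] with k hk
    have h1 : (q * x) ^ k = q ^ k * x ^ k := h.mul_pow k
    have h2 : ‖(q * x) ^ k‖₊ ≤ ‖q ^ k‖₊ * ‖x‖₊ ^ k := by
      rw [h1]
      calc ‖q ^ k * x ^ k‖₊ ≤ ‖q ^ k‖₊ * ‖x ^ k‖₊ := nnnorm_mul_le _ _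
        _ ≤ ‖q ^ k‖₊ * ‖x‖₊ ^ k := by gcongr; exact nnnorm_pow_le' x (by omega)
    calc (‖(q * x) ^ k‖₊ : ENNReal) ^ (1 / (k:ℝ))
        ≤ ((‖q ^ k‖₊ * ‖x‖₊ ^ k : NNReal) : ENNReal) ^ (1 / (k:ℝ)) := by
          exact ENNReal.rpow_le_rpow (by exact_mod_cast h2) (by positivity)
      _ = (‖q ^ k‖₊ : ENNReal) ^ (1 / (k:ℝ)) * ((‖x‖₊ : ENNReal) ^ (k:ℕ)) ^ (1 / (k:ℝ)) := by
          rw [ENNReal.coe_mul, ENNReal.mul_rpow_of_nonneg _ _ (by positivity), ENNReal.coe_pow]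
      _ = (‖q ^ k‖₊ : ENNReal) ^ (1 / (k:ℝ)) * ‖x‖₊ := by
          congr 1
          rw [← ENNReal.rpow_natCast, ← ENNReal.rpow_mul]
          rw [mul_one_div, div_self (by exact_mod_cast (by omega : k ≠ 0)), ENNReal.rpow_one]
  have hlim : Tendsto (fun k : ℕ => (‖q ^ k‖₊ : ENNReal) ^ (1 / (k:ℝ)) * ‖x‖₊)
      atTop (nhds 0) := by
    have := ENNReal.Tendsto.mul_const (b := (‖x‖₊ : ENNReal)) (quasi_tendsto hq)
      (Or.inr ENNReal.coe_ne_top)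
    simpa using this
  have : atTop.liminf (fun k : ℕ => (‖(q * x) ^ k‖₊ : ENNReal) ^ (1 / (k:ℝ))) ≤ 0 := by
    calc atTop.liminf (fun k : ℕ => (‖(q * x) ^ k‖₊ : ENNReal) ^ (1 / (k:ℝ)))
        ≤ atTop.liminf (fun k : ℕ => (‖q ^ k‖₊ : ENNReal) ^ (1 / (k:ℝ)) * ‖x‖₊) :=
          liminf_le_liminf hbound
      _ = 0 := hlim.liminf_eq
  exact le_antisymm (hle.trans this) zero_le

lemma Quasinilpotent.isUnit_one_add {q : A} (hq : Quasinilpotent q) : IsUnit (1 + q) := by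
  by_contra h
  have hmem : (-1 : ℂ) ∈ spectrum ℂ q := by
    rw [spectrum.mem_iff]
    intro hu
    apply h
    have : (algebraMap ℂ A) (-1) - q = -(1 + q) := by
      simp only [map_neg, map_one]
      rw [neg_add, sub_eq_add_neg, add_comm]
    rw [this] at hu
    exact (IsUnit.neg_iff _).mp hu
  have : (‖(-1:ℂ)‖₊ : ENNReal) ≤ spectralRadius ℂ q := le_iSup₂ (f := fun k _ => (‖k‖₊ : ENNReal)) (-1) hmem
  rw [hq] at this
  simp at this

/-- eventual norm bound on powers of a quasinilpotent -/
lemma quasi_pow_norm_small {q : A} (hq : Quasinilpotent q) :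
    ∀ᶠ k : ℕ in atTop, ‖q ^ k‖ ≤ (8 : ℝ)⁻¹ ^ k := by
  have h8 : (0 : ENNReal) < (8:ENNReal)⁻¹ := by simp
  have hev : ∀ᶠ k : ℕ in atTop, (‖q ^ k‖₊ : ENNReal) ^ (1 / (k:ℝ)) < (8:ENNReal)⁻¹ := by
    have := quasi_tendsto hq
    exact this.eventually_lt_const (by simp)
  filter_upwards [hev, eventually_ge_atTop 1] with k hklt hk1
  have hk : (‖q ^ k‖₊ : ENNReal) ^ (1 / (k:ℝ)) ≤ (8:ENNReal)⁻¹ := le_of_lt hklt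
  -- from ‖q^k‖₊^(1/k) ≤ 8⁻¹ deduce ‖q^k‖ ≤ 8⁻¹^k
  have hkR : (k : ℝ) ≠ 0 := by exact_mod_cast (by omega : k ≠ 0)
  have h1 : ((‖q ^ k‖₊ : ENNReal) ^ (1 / (k:ℝ))) ^ (k:ℝ) ≤ ((8:ENNReal)⁻¹) ^ (k:ℝ) :=
    ENNReal.rpow_le_rpow hk (by positivity)
  rw [← ENNReal.rpow_mul, one_div, inv_mul_cancel₀ hkR, ENNReal.rpow_one] at h1
  have h8 : ((8:ENNReal)⁻¹) = (((8:NNReal)⁻¹ : NNReal) : ENNReal) := by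
    simp [ENNReal.coe_inv]
  rw [h8, ← ENNReal.coe_rpow_of_nonneg _ (by positivity), ENNReal.coe_le_coe] at h1
  have h2 : ‖q ^ k‖₊ ≤ (8:NNReal)⁻¹ ^ k := by
    rwa [← NNReal.rpow_natCast ((8:NNReal)⁻¹) k]
  calc ‖q ^ k‖ = (‖q ^ k‖₊ : ℝ) := rfl
    _ ≤ (((8:NNReal)⁻¹ ^ k : NNReal) : ℝ) := by exact_mod_cast h2
    _ = (8:ℝ)⁻¹ ^ k := by push_cast; norm_num

lemma summable_norm_aux {q : A} (hq : Quasinilpotent q) (c : ℕ → ℂ) (C : ℝ)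
    (hc : ∀ k, ‖c k‖ ≤ C * 4 ^ k) : Summable (fun k => ‖c k • q ^ k‖) := by
  apply Summable.of_norm_bounded_eventually_nat (g := fun k => C * 2⁻¹ ^ k)
  · exact (summable_geometric_of_lt_one (by norm_num) (by norm_num)).mul_left C
  · filter_upwards [quasi_pow_norm_small hq] with k hk
    rw [Real.norm_eq_abs, abs_of_nonneg (norm_nonneg _), norm_smul]
    calc ‖c k‖ * ‖q ^ k‖ ≤ (C * 4 ^ k) * (8⁻¹ ^ k) := by
          have hC : (0:ℝ) ≤ C := by
            have := (norm_nonneg (c 0)).trans (hc 0)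
            simpa using this
          apply mul_le_mul (hc k) hk (norm_nonneg _) (by positivity)
      _ = C * 2⁻¹ ^ k := by
          rw [mul_assoc, ← mul_pow]
          norm_num

lemma summable_aux {q : A} (hq : Quasinilpotent q) (c : ℕ → ℂ) (C : ℝ)
    (hc : ∀ k, ‖c k‖ ≤ C * 4 ^ k) : Summable (fun k => c k • q ^ k) :=
  (summable_norm_aux hq c C hc).of_norm

lemma exists_idempotent (s : A) (hn : Quasinilpotent (s * s - s)) :
    ∃ e : A, e * e = e ∧ (∀ t : A, Commute t s → Commute t e) ∧ Quasinilpotent (s - e) := by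
  set n := s * s - s with hn_def
  have hsn : Commute s n := ((Commute.refl s).mul_right (Commute.refl s)).sub_right (Commute.refl s)
  set c : ℕ → ℂ := fun k => (-1) ^ k * (Nat.centralBinom k : ℂ) with hc_def
  have hc_norm : ∀ k, ‖c k‖ = (Nat.centralBinom k : ℝ) := by
    intro k
    simp [hc_def, norm_mul, Complex.norm_natCast]
  have hc_bound : ∀ k, ‖c k‖ ≤ 1 * 4 ^ k := by
    intro k
    rw [hc_norm, one_mul]
    exact_mod_cast centralBinom_le_four_pow k
  have hsum : Summable (fun k => c k • n ^ k) := summable_aux hn c 1 hc_bound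
  have hsumn : Summable (fun k => ‖c k • n ^ k‖) := summable_norm_aux hn c 1 hc_bound
  set w : A := ∑' k, c k • n ^ k with hw_def
  have hcomm_w : ∀ t : A, Commute t n → Commute t w := fun t ht =>
    Commute.tsum_right t fun k => (ht.pow_right k).smul_right _
  -- Cauchy product
  have hconv : ∀ m : ℕ, ∑ k ∈ range (m + 1), c k * c (m - k) = (-4 : ℂ) ^ m := by
    intro m
    have : ∀ k ∈ range (m + 1), c k * c (m - k)
        = (-1 : ℂ) ^ m * ((Nat.centralBinom k * Nat.centralBinom (m - k) : ℕ) : ℂ) := by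
      intro k hk
      simp only [Finset.mem_range] at hk
      have hkm : k + (m - k) = m := by omega
      rw [hc_def]
      push_cast
      rw [show ((-1:ℂ))^k * (Nat.centralBinom k : ℂ) * ((-1:ℂ)^(m-k) * (Nat.centralBinom (m-k) : ℂ))
          = ((-1:ℂ)^k * (-1:ℂ)^(m-k)) * ((Nat.centralBinom k : ℂ) * (Nat.centralBinom (m-k):ℂ)) by ring,
        ← pow_add, hkm]
    rw [Finset.sum_congr rfl this, ← Finset.mul_sum, ← Nat.cast_sum]
    rw [show ∑ i ∈ range (m+1), Nat.centralBinom i * Nat.centralBinom (m - i) = 4 ^ m from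
      centralBinom_conv m]
    push_cast
    rw [show ((-4:ℂ))^m = (-1:ℂ)^m * 4^m by rw [← neg_one_mul, mul_pow]]
  have hww : w * w = ∑' m, (-4 : ℂ) ^ m • n ^ m := by
    rw [hw_def, tsum_mul_tsum_eq_tsum_sum_range_of_summable_norm hsumn hsumn]
    congr 1
    funext m
    have : ∀ k ∈ range (m + 1), (c k • n ^ k) * (c (m - k) • n ^ (m - k))
        = (c k * c (m - k)) • n ^ m := by
      intro k hk
      simp only [Finset.mem_range] at hk
      rw [smul_mul_smul_comm, ← pow_add]
      congr 2
      omega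
    rw [Finset.sum_congr rfl this, ← Finset.sum_smul, hconv]
  -- geometric series facts
  have hgc : ∀ k : ℕ, ‖((-4 : ℂ) ^ k)‖ ≤ 1 * 4 ^ k := by
    intro k
    simp [norm_pow]
  have hgsum : Summable (fun m => (-4 : ℂ) ^ m • n ^ m) := summable_aux hn _ 1 hgc
  have hinv : (∑' m, (-4 : ℂ) ^ m • n ^ m) * (1 + 4 * n) = 1 := by
    have h4 : ∀ m : ℕ, ((-4 : ℂ) ^ m • n ^ m) * (4 * n) = -((-4 : ℂ) ^ (m+1) • n ^ (m+1)) := by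
      intro m
      have hc4 : (4 : A) * n = (4 : ℂ) • n := by
        rw [Algebra.smul_def, map_ofNat]
      rw [hc4, smul_mul_smul_comm, ← neg_smul]
      congr 1
      · rw [pow_succ]; ring
      · rw [pow_succ]
    rw [mul_add, mul_one]
    rw [← (hgsum.tsum_mul_right (4 * n))]
    have hshift := Summable.tsum_eq_zero_add hgsum
    simp only [pow_zero, one_smul] at hshift
    calc (∑' m, (-4:ℂ) ^ m • n ^ m) + ∑' m, ((-4:ℂ) ^ m • n ^ m) * (4 * n)
        = (∑' m, (-4:ℂ) ^ m • n ^ m) + ∑' m, -((-4:ℂ) ^ (m+1) • n ^ (m+1)) := by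
          congr 1
          exact tsum_congr h4
      _ = (∑' m, (-4:ℂ) ^ m • n ^ m) - ∑' m, (-4:ℂ) ^ (m+1) • n ^ (m+1) := by
          rw [tsum_neg, sub_eq_add_neg]
      _ = 1 := by rw [hshift]; abel
  have hcomm_g : Commute (1 + 4 * n) (∑' m, (-4 : ℂ) ^ m • n ^ m) := by
    apply Commute.tsum_right
    intro m
    have h1 : Commute n ((-4:ℂ) ^ m • n ^ m) := ((Commute.refl n).pow_right m).smul_right _
    have h2 : Commute ((4:A) * n) ((-4:ℂ) ^ m • n ^ m) :=
      (Commute.ofNat_left 4 _).mul_left h1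
    exact (Commute.one_left _).add_left h2
  -- notation: g for the geometric series (= w * w)
  set g : A := ∑' m, (-4 : ℂ) ^ m • n ^ m with hg_def
  -- the "square root" step
  set y : A := 2 * s - 1 with hy_def
  have hyn : Commute y n := ((Commute.ofNat_left 2 n).mul_left hsn).sub_left (Commute.one_left n)
  have hyw : Commute y w := hcomm_w y hyn
  have hy2 : y * y = 1 + 4 * n := by
    rw [hy_def, hn_def]
    noncomm_ring
  set x : A := y * w with hx_def
  have hx2 : x * x = 1 := by
    have h1 : x * x = (y * y) * (w * w) := by
      rw [hx_def, mul_assoc, ← mul_assoc w y w, ← hyw.eq, mul_assoc, ← mul_assoc]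
    rw [h1, hy2, hww, hcomm_g.eq, hinv]
  set e : A := (2⁻¹ : ℂ) • (1 + x) with he_def
  have he : e * e = e := by
    have hexp : (1 + x) * (1 + x) = (2:ℂ) • (1 + x) := by
      calc (1+x)*(1+x) = 1*(1+x) + x*(1+x) := add_mul 1 x (1+x)
        _ = (1+x) + (x + x*x) := by rw [one_mul, mul_add, mul_one]
        _ = (1+x) + (x + 1) := by rw [hx2]
        _ = (2:ℂ) • (1+x) := by rw [two_smul]; abel
    rw [he_def, smul_mul_smul_comm, hexp, smul_smul]
    congr 1
    norm_num
  have hcomm_e : ∀ t : A, Commute t s → Commute t e := by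
    intro t ht
    have htn : Commute t n := (ht.mul_right ht).sub_right ht
    have hty : Commute t y := ((Commute.ofNat_right t 2).mul_right ht).sub_right
      (Commute.one_right t)
    have htx : Commute t x := hty.mul_right (hcomm_w t htn)
    exact ((Commute.one_right t).add_right htx).smul_right _
  -- s - e is quasinilpotent
  set z : A := ∑' k, c (k + 1) • n ^ k with hz_def
  have hzc_bound : ∀ k, ‖c (k + 1)‖ ≤ 4 * 4 ^ k := by
    intro k
    rw [hc_norm]
    calc (Nat.centralBinom (k+1) : ℝ) ≤ ((4:ℕ) ^ (k+1) : ℕ) := by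
          exact_mod_cast centralBinom_le_four_pow (k+1)
      _ = 4 * 4 ^ k := by push_cast; ring
  have hzsum : Summable (fun k => c (k + 1) • n ^ k) := summable_aux hn _ 4 hzc_bound
  have hzn : Commute z n := by
    rw [hz_def]
    exact Commute.tsum_left n fun k => ((Commute.refl n).pow_left k).smul_left _
  have hw1 : w = 1 + z * n := by
    rw [hw_def, Summable.tsum_eq_zero_add hsum]
    congr 1
    · simp [hc_def]
    · rw [← hzsum.tsum_mul_right n]
      apply tsum_congr
      intro k
      rw [smul_mul_assoc, ← pow_succ]
  have hse : s - e = n * ((-(2⁻¹ : ℂ)) • (y * z)) := by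
    have h1 : s - e = (-(2⁻¹:ℂ)) • (y * (z * n)) := by
      rw [he_def, hx_def, hw1]
      have h2 : y * (1 + z * n) = y + y * (z * n) := by rw [mul_add, mul_one]
      rw [h2]
      have h3 : (1 : A) + (y + y * (z * n)) = (1 + y) + y * (z * n) := by abel
      rw [h3, smul_add]
      have h4 : (2⁻¹:ℂ) • ((1:A) + y) = s := by
        rw [hy_def]
        have : (1:A) + (2 * s - 1) = 2 * s := by abel
        rw [this]
        have h5 : (2:A) * s = (2:ℂ) • s := by
          rw [Algebra.smul_def, map_ofNat]
        rw [h5, smul_smul]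
        norm_num
      rw [h4, neg_smul]
      abel
    rw [h1]
    have h6 : y * (z * n) = n * (y * z) := by
      rw [← mul_assoc]
      exact (hyn.mul_left hzn).eq
    rw [h6, mul_smul_comm]
  have hqse : Quasinilpotent (s - e) := by
    rw [hse]
    exact hn.mul_commute ((hyn.symm.mul_right hzn.symm).smul_right _)
  exact ⟨e, he, hcomm_e, hqse⟩

end Aux

theorem stmt4 {A : Type*} [NormedRing A] [NormedAlgebra ℂ A] [CompleteSpace A] (a : A) :
    HasGDrazin a ↔ ∃ p : A, a * p = p * a ∧ IsUnit (a + p) ∧ Quasinilpotent (a * p) := by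
  constructor
  · -- forward
    rintro ⟨b, hab, hb, hq⟩
    obtain ⟨e, he_def⟩ : ∃ e : A, e = a * b := ⟨_, rfl⟩
    have hEb : e * b = b := by rw [he_def, hab]; exact hb.symm
    have hbe : b * e = b := by rw [he_def, ← mul_assoc]; exact hb.symm
    have hee : e * e = e := by
      rw [he_def]
      calc a * b * (a * b) = a * (b * (a * b)) := by rw [mul_assoc]
        _ = a * (b * a * b) := by rw [mul_assoc b a b]
        _ = a * b := by rw [← hb]
    have hae : Commute a e := by
      rw [he_def]
      exact (Commute.refl a).mul_right hab
    obtain ⟨p, hp_def⟩ : ∃ p : A, p = 1 - e := ⟨_, rfl⟩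
    have hap : Commute a p := by
      rw [hp_def]
      exact (Commute.one_right a).sub_right hae
    obtain ⟨q, hq_def⟩ : ∃ q : A, q = a - a ^ 2 * b := ⟨_, rfl⟩
    have hq2 : q = a - a * e := by rw [hq_def, he_def, pow_two, mul_assoc]
    have haq : a * p = q := by rw [hp_def, mul_sub, mul_one, hq2]
    have hqe : e * q = 0 := by
      rw [hq2, mul_sub, ← mul_assoc, ← hae.eq, mul_assoc, hee, sub_self]
    have hqa : Commute q a := by
      rw [hq2]
      exact (Commute.refl a).sub_left ((Commute.refl a).mul_left hae.symm)
    have hep : Commute e p := by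
      rw [hp_def]
      exact (Commute.one_right e).sub_right (Commute.refl e)
    have hqp : Commute q p := by
      rw [hq2]
      exact hap.sub_left (hap.mul_left hep)
    -- the unit V = 1 + q
    have hV : IsUnit (1 + q) := by
      rw [hq_def]
      exact hq.isUnit_one_add
    obtain ⟨V, hV_def⟩ : ∃ V : Aˣ, V = hV.unit := ⟨_, rfl⟩
    have hVc : (↑V : A) = 1 + q := by rw [hV_def]; exact hV.unit_spec
    have heV : e * ↑V = e := by rw [hVc, mul_add, mul_one, hqe, add_zero]
    have heV' : e * ↑V⁻¹ = e := by
      conv_lhs => rw [← heV]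
      rw [mul_assoc, Units.mul_inv, mul_one]
    have hpb : p * b = 0 := by rw [hp_def, sub_mul, one_mul, hEb, sub_self]
    have hbp : b * p = 0 := by rw [hp_def, mul_sub, mul_one, hbe, sub_self]
    have hpp : p * p = p := by
      rw [hp_def, sub_mul, one_mul, mul_sub, mul_one, hee, sub_self, sub_zero]
    obtain ⟨y, hy_def⟩ : ∃ y : A, y = b + p * ↑V⁻¹ := ⟨_, rfl⟩
    have hxp : (a + p) * p = ↑V - e := by
      rw [add_mul, hpp, haq, hVc, hp_def]
      abel
    have hxy : (a + p) * y = 1 := by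
      have h1 : (a + p) * b = e := by rw [add_mul, hpb, add_zero, ← he_def]
      have h2 : (a + p) * (p * ↑V⁻¹) = 1 - e := by
        rw [← mul_assoc, hxp, sub_mul, Units.mul_inv, heV']
      rw [hy_def, mul_add, h1, h2]
      abel
    have hcxy : Commute (a + p) y := by
      rw [hy_def]
      have hVa : Commute (↑V : A) a := by
        rw [hVc]
        exact (Commute.one_left a).add_left hqa
      have hVp : Commute (↑V : A) p := by
        rw [hVc]
        exact (Commute.one_left p).add_left hqp
      have hcb : Commute (a + p) b := by
        have hab' : Commute a b := hab
        refine hab'.add_left ?_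
        show p * b = b * p
        rw [hpb, hbp]
      have hcpV : Commute (a + p) (p * ↑V⁻¹) :=
        (hap.mul_right (hVa.units_inv_left.symm)).add_left
          ((Commute.refl p).mul_right (hVp.units_inv_left.symm))
      exact hcb.add_right hcpV
    have hyx : y * (a + p) = 1 := by rw [← hcxy.eq, hxy]
    refine ⟨p, hap.eq, ⟨⟨a + p, y, hxy, hyx⟩, rfl⟩, ?_⟩
    rw [haq, hq_def]
    exact hq
  · -- backward
    rintro ⟨p, hcomm, hu, hq⟩
    obtain ⟨U, hU_def⟩ : ∃ U : Aˣ, U = hu.unit := ⟨_, rfl⟩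
    have hUc : (↑U : A) = a + p := by rw [hU_def]; exact hu.unit_spec
    have hUa : Commute (↑U : A) a := by
      rw [hUc]
      have hcomm' : Commute a p := hcomm
      exact (Commute.refl a).add_left hcomm'.symm
    have hUp : Commute (↑U : A) p := by
      rw [hUc]
      have hcomm' : Commute a p := hcomm
      exact hcomm'.add_left (Commute.refl p)
    have hU'a : Commute (↑U⁻¹ : A) a := hUa.units_inv_left
    have hU'p : Commute (↑U⁻¹ : A) p := hUp.units_inv_left
    obtain ⟨s, hs_def⟩ : ∃ s : A, s = a * ↑U⁻¹ := ⟨_, rfl⟩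
    have hsa : Commute s a := by
      rw [hs_def]
      exact (Commute.refl a).mul_left hU'a
    have hsU' : Commute s (↑U⁻¹ : A) := by
      rw [hs_def]
      exact hU'a.symm.mul_left (Commute.refl _)
    -- s * U = a
    have hsU : s * ↑U = a := by rw [hs_def, mul_assoc, Units.inv_mul, mul_one]
    -- s*s - s = (a*p) * (-(U⁻¹ * U⁻¹))
    have hU'U' : (↑U : A) * (↑U⁻¹ * ↑U⁻¹) = ↑U⁻¹ := by
      rw [← mul_assoc, Units.mul_inv, one_mul]
    have hs_alt : s = a * (a + p) * (↑U⁻¹ * ↑U⁻¹) := by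
      rw [hs_def, ← hUc, mul_assoc, hU'U']
    have hss : s * s = a * a * (↑U⁻¹ * ↑U⁻¹) := by
      rw [hs_def]
      calc a * ↑U⁻¹ * (a * ↑U⁻¹) = a * (↑U⁻¹ * a) * ↑U⁻¹ := by
            rw [mul_assoc, mul_assoc, mul_assoc]
        _ = a * (a * ↑U⁻¹) * ↑U⁻¹ := by rw [hU'a.eq]
        _ = a * a * (↑U⁻¹ * ↑U⁻¹) := by rw [mul_assoc, mul_assoc, mul_assoc]
    have hn_eq : s * s - s = a * p * -(↑U⁻¹ * ↑U⁻¹) := by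
      rw [hss, hs_alt, mul_add, mul_neg]
      rw [add_mul (a*a) (a*p) (↑U⁻¹ * ↑U⁻¹)]
      abel
    have hapU : Commute (a * p) (-(↑U⁻¹ * ↑U⁻¹) : A) :=
      ((hU'a.symm.mul_left hU'p.symm).mul_right (hU'a.symm.mul_left hU'p.symm)).neg_right
    have hn : Quasinilpotent (s * s - s) := by
      rw [hn_eq]
      exact hq.mul_commute hapU
    obtain ⟨e, hee, hce, hqse⟩ := exists_idempotent s hn
    have hse : Commute s e := hce s (Commute.refl s)
    have hae : Commute a e := hce a hsa.symm
    have hM : IsUnit (1 + (s - e)) := hqse.isUnit_one_add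
    obtain ⟨M, hM_def⟩ : ∃ M : Aˣ, M = hM.unit := ⟨_, rfl⟩
    have hMc : (↑M : A) = 1 + (s - e) := by rw [hM_def]; exact hM.unit_spec
    have hMs : Commute (↑M : A) s := by
      rw [hMc]
      exact (Commute.one_left s).add_left ((Commute.refl s).sub_left hse.symm)
    have hMe : Commute (↑M : A) e := by
      rw [hMc]
      exact (Commute.one_left e).add_left (hse.sub_left (Commute.refl e))
    have hMa : Commute (↑M : A) a := by
      rw [hMc]
      exact (Commute.one_left a).add_left (hsa.sub_left hae.symm)
    have hM's : Commute (↑M⁻¹ : A) s := hMs.units_inv_left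
    have hM'e : Commute (↑M⁻¹ : A) e := hMe.units_inv_left
    have hM'a : Commute (↑M⁻¹ : A) a := hMa.units_inv_left
    obtain ⟨b, hb_def⟩ : ∃ b : A, b = e * ↑M⁻¹ * ↑U⁻¹ := ⟨_, rfl⟩
    have habc : Commute a b := by
      rw [hb_def]
      exact (hae.mul_right hM'a.symm).mul_right hU'a.symm
    have hesM : e * s * ↑M⁻¹ = e := by
      have h1 : e * s = e * ↑M := by
        rw [hMc, mul_add, mul_one, mul_sub, hee]
        abel
      rw [h1, mul_assoc, Units.mul_inv, mul_one]
    have hU'a_s : ↑U⁻¹ * a = s := by rw [hU'a.eq, ← hs_def]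
    have hX : e * ↑M⁻¹ * s = e := by
      rw [mul_assoc, hM's.eq, ← mul_assoc, hesM]
    have hba : b * a = e := by rw [hb_def, mul_assoc (e * ↑M⁻¹), hU'a_s, hX]
    have h2 : b * a * b = b := by
      have h3 : b * a * b = e * b := by rw [hba]
      rw [h3, hb_def, ← mul_assoc, ← mul_assoc, hee]
    -- third condition
    have hUs : Commute (↑U : A) s := by
      rw [hs_def]
      exact hUa.mul_right ((Commute.refl (↑U : A)).units_inv_right)
    have hUe : Commute (↑U : A) e := hce (↑U : A) hUs
    have ha2b : a ^ 2 * b = a * e := by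
      rw [pow_two, mul_assoc, habc.eq, hba]
    have hae_eq : a * e = s * e * ↑U := by
      rw [← hsU, mul_assoc, hUe.eq, ← mul_assoc]
    have hq3 : a - a ^ 2 * b = (s - e) * ((1 - e) * ↑U) := by
      rw [ha2b, hae_eq, ← hsU]
      have hexp : (s - e) * ((1 - e) * ↑U) = (s - s * e) * ↑U := by
        rw [← mul_assoc, sub_mul s e (1 - e), mul_sub, mul_sub, mul_one, mul_one, hee]
        congr 1
        abel
      rw [hexp, sub_mul]
    have hq4 : Quasinilpotent (a - a ^ 2 * b) := by
      rw [hq3]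
      have hc1 : Commute (s - e) (1 - e) :=
        ((Commute.one_right s).sub_right hse).sub_left ((Commute.one_right e).sub_right
          (Commute.refl e))
      exact hqse.mul_commute (hc1.mul_right (hUs.symm.sub_left hUe.symm))
    exact ⟨b, habc.eq, h2.symm, hq4⟩
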